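/- Let G be a hypergraph containing a block B of size b ≥ 3, i.e., b nodes v_1, …, v_b of G together with b hyperedges of G, the i-th of which equals B ∖ {v_i}. In every k-way partitioning of G in which B intersects more than one part, at least b − 1 of the b hyperedges of the block are cut; in particular, both the cut-net cost and the connectivity cost of the partitioning are at least b − 1. -/

import Mathlib

open Finset

/-- **Block splitting lemma.**
A *block* of size `b` consists of `b` nodes `v 0, …, v (b-1)` together with the `b`
hyperedges `B \ {v i}` (where `B` is the set of all block nodes).  If in a `k`-way
partitioning `P` the block intersects more than one part, then at least `b - 1` of the
`b` block hyperedges are cut; in particular both the cut-net cost and the connectivity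
cost of the partitioning are at least `b - 1`. -/
theorem block_split_cost {α : Type*} [DecidableEq α] {k b : ℕ} (hb : 3 ≤ b)
    (E : Finset (Finset α)) (v : Fin b → α) (hv : Function.Injective v)
    (hE : ∀ i : Fin b, (Finset.univ.image v) \ {v i} ∈ E)
    (P : α → Fin k)
    (hsplit : ∃ i j : Fin b, P (v i) ≠ P (v j)) :
    b - 1 ≤ (Finset.univ.filter (fun i : Fin b =>
        1 < ((((Finset.univ.image v) \ {v i}).image P).card))).card ∧
    b - 1 ≤ (E.filter (fun e => 1 < (e.image P).card)).card ∧
    b - 1 ≤ ∑ e ∈ E, ((e.image P).card - 1) := by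
  set B := Finset.univ.image v with hB
  have key : ∀ i j : Fin b, ¬ 1 < ((B \ {v i}).image P).card →
      ¬ 1 < ((B \ {v j}).image P).card → i = j := by
    intro i j hi hj
    by_contra hij
    have hconst : ∀ (m : Fin b) (x : α), ¬ 1 < ((B \ {v m}).image P).card →
        x ∈ B \ {v m} → ∀ y ∈ B \ {v m}, P x = P y := by
      intro m x hm hx y hy
      exact Finset.card_le_one.mp (not_lt.mp hm) (P x) (Finset.mem_image_of_mem P hx)
        (P y) (Finset.mem_image_of_mem P hy)
    obtain ⟨m, hmi, hmj⟩ : ∃ m : Fin b, m ≠ i ∧ m ≠ j := by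
      have hne : (({i, j} : Finset (Fin b))ᶜ).Nonempty := by
        rw [← Finset.card_pos, Finset.card_compl]
        have : ({i, j} : Finset (Fin b)).card ≤ 2 :=
          (Finset.card_insert_le _ _).trans (by simp)
        simp only [Fintype.card_fin]
        omega
      obtain ⟨m, hm⟩ := hne
      rw [Finset.mem_compl] at hm
      simp only [Finset.mem_insert, Finset.mem_singleton, not_or] at hm
      exact ⟨m, hm.1, hm.2⟩
    have hvm_i : v m ∈ B \ {v i} := by
      refine Finset.mem_sdiff.mpr ⟨by simp [hB], ?_⟩
      simp only [Finset.mem_singleton]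
      exact fun h => hmi (hv h)
    have hvm_j : v m ∈ B \ {v j} := by
      refine Finset.mem_sdiff.mpr ⟨by simp [hB], ?_⟩
      simp only [Finset.mem_singleton]
      exact fun h => hmj (hv h)
    have hall : ∀ n : Fin b, P (v n) = P (v m) := by
      intro n
      by_cases hni : n = i
      · subst hni
        have hvn : v n ∈ B \ {v j} := by
          refine Finset.mem_sdiff.mpr ⟨by simp [hB], ?_⟩
          simp only [Finset.mem_singleton]
          exact fun h => hij (hv h)
        exact hconst j _ hj hvn _ hvm_j
      · have hvn : v n ∈ B \ {v i} := by
          refine Finset.mem_sdiff.mpr ⟨by simp [hB], ?_⟩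
          simp only [Finset.mem_singleton]
          exact fun h => hni (hv h)
        exact hconst i _ hi hvn _ hvm_i
    obtain ⟨a, c, hac⟩ := hsplit
    exact hac ((hall a).trans (hall c).symm)
  have h1 : b - 1 ≤ (Finset.univ.filter (fun i : Fin b =>
      1 < ((B \ {v i}).image P).card)).card := by
    have hcomp : (Finset.univ.filter (fun i : Fin b =>
        ¬ 1 < ((B \ {v i}).image P).card)).card ≤ 1 := by
      apply Finset.card_le_one.mpr
      intro x hx y hy
      simp only [Finset.mem_filter] at hx hy
      exact key x y hx.2 hy.2
    have := Finset.card_filter_add_card_filter_not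
      (s := (Finset.univ : Finset (Fin b)))
      (p := fun i : Fin b => 1 < ((B \ {v i}).image P).card)
    simp only [Finset.card_univ, Fintype.card_fin] at this
    omega
  have h2 : b - 1 ≤ (E.filter (fun e => 1 < (e.image P).card)).card := by
    refine le_trans h1 (Finset.card_le_card_of_injOn (fun i => B \ {v i}) ?_ ?_)
    · intro i hi
      simp only [Finset.mem_coe, Finset.mem_filter] at hi ⊢
      exact ⟨hE i, hi.2⟩
    · intro i _ j _ hij
      simp only at hij
      by_contra hne
      have hvi : v i ∈ B \ {v j} := by
        refine Finset.mem_sdiff.mpr ⟨by simp [hB], ?_⟩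
        simp only [Finset.mem_singleton]
        exact fun h => hne (hv h)
      rw [← hij] at hvi
      simp [Finset.mem_sdiff] at hvi
  refine ⟨h1, h2, le_trans h2 ?_⟩
  calc (E.filter (fun e => 1 < (e.image P).card)).card
      = ∑ e ∈ E.filter (fun e => 1 < (e.image P).card), 1 := by simp
    _ ≤ ∑ e ∈ E.filter (fun e => 1 < (e.image P).card), ((e.image P).card - 1) := by
        apply Finset.sum_le_sum
        intro e he
        simp only [Finset.mem_filter] at he
        omega
    _ ≤ ∑ e ∈ E, ((e.image P).card - 1) :=
        Finset.sum_le_sum_of_subset (Finset.filter_subset _ _)
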